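/- The map that keeps the numerals of a build-tree code and reverses, for each fixed numeral v, the order of the signs appearing over occurrences of v, is an involution on build-tree codes of length n that restricts to a bijection between the set of build-tree codes such that each v^- is preceded by some earlier v^+ and the set of build-tree codes such that each v^- is followed by some later v^+. -/

import Mathlib

/-- Build-tree codes of length `n` (`true = +`, `false = -`; `(0, -)`
forbidden). -/
def IsBTC (n : ℕ) (c : Fin n → ℕ × Bool) : Prop :=
  ∀ i : Fin n, (c i).1 ≤ i.val ∧ c i ≠ (0, false)

/-- The sequence of signs appearing over the occurrences of the numeral `v`
in the code `c`, in left-to-right order. -/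
def signsOf (n : ℕ) (c : Fin n → ℕ × Bool) (v : ℕ) : List Bool :=
  ((List.finRange n).filter fun i => (c i).1 = v).map fun i => (c i).2

/-- Each `v⁻` is preceded by some earlier `v⁺`. -/
def EachPreceded (n : ℕ) (c : Fin n → ℕ × Bool) : Prop :=
  ∀ i : Fin n, (c i).2 = false → ∃ j : Fin n, j < i ∧ c j = ((c i).1, true)

/-- Each `v⁻` is followed by some later `v⁺`. -/
def EachFollowed (n : ℕ) (c : Fin n → ℕ × Bool) : Prop :=
  ∀ i : Fin n, (c i).2 = false → ∃ j : Fin n, i < j ∧ c j = ((c i).1, true)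

namespace SRI
variable {n : ℕ}

/-- Occurrence positions of numeral `v`. -/
def occ (c : Fin n → ℕ × Bool) (v : ℕ) : List (Fin n) :=
  (List.finRange n).filter fun j => (c j).1 = v

lemma mem_occ {c : Fin n → ℕ × Bool} {v : ℕ} {i : Fin n} :
    i ∈ occ c v ↔ (c i).1 = v := by
  simp [occ, List.mem_filter, List.mem_finRange]

lemma occ_nodup (c : Fin n → ℕ × Bool) (v : ℕ) : (occ c v).Nodup :=
  (List.nodup_finRange n).filter _

lemma occ_pairwise (c : Fin n → ℕ × Bool) (v : ℕ) : (occ c v).Pairwise (· < ·) :=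
  (List.pairwise_lt_finRange n).filter _

lemma occ_get_lt_iff {c : Fin n → ℕ × Bool} {v : ℕ} {k k' : ℕ}
    (hk : k < (occ c v).length) (hk' : k' < (occ c v).length) :
    (occ c v).get ⟨k, hk⟩ < (occ c v).get ⟨k', hk'⟩ ↔ k < k' := by
  constructor
  · intro h
    by_contra hle
    push_neg at hle
    rcases lt_or_eq_of_le hle with h' | h'
    · exact absurd ((List.pairwise_iff_get.mp (occ_pairwise c v)) _ _ h') (asymm h)
    · subst h'; exact lt_irrefl _ h
  · intro h
    exact (List.pairwise_iff_get.mp (occ_pairwise c v)) _ _ h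

def mirror (c : Fin n → ℕ × Bool) (i : Fin n) : Fin n :=
  (occ c (c i).1).getD
    ((occ c (c i).1).length - 1 - (occ c (c i).1).idxOf i) i

lemma mirror_get {c : Fin n → ℕ × Bool} {v : ℕ} {k : ℕ}
    (hk : k < (occ c v).length) :
    mirror c ((occ c v).get ⟨k, hk⟩) =
      (occ c v).get ⟨(occ c v).length - 1 - k, by omega⟩ := by
  set i := (occ c v).get ⟨k, hk⟩ with hi
  have hmem : i ∈ occ c v := List.get_mem _ _
  have hv : (c i).1 = v := mem_occ.mp hmem
  have hidx : (occ c v).idxOf i = k := by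
    rw [hi]; exact List.Nodup.idxOf_getElem (occ_nodup c v) k hk
  rw [mirror, hv, hidx]
  exact List.getD_eq_get _ _ ⟨_, by omega⟩

lemma mirror_mirror (c : Fin n → ℕ × Bool) (i : Fin n) :
    mirror c (mirror c i) = i := by
  have hmem : i ∈ occ c (c i).1 := mem_occ.mpr rfl
  have hk : (occ c (c i).1).idxOf i < (occ c (c i).1).length :=
    List.idxOf_lt_length_iff.mpr hmem
  have hi : i = (occ c (c i).1).get ⟨_, hk⟩ := (List.idxOf_get hk).symm
  conv_lhs => rw [hi, mirror_get hk, mirror_get]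
  convert hi.symm using 3
  omega

lemma mirror_fst (c : Fin n → ℕ × Bool) (i : Fin n) :
    (c (mirror c i)).1 = (c i).1 := by
  have hmem : i ∈ occ c (c i).1 := mem_occ.mpr rfl
  have hk : (occ c (c i).1).idxOf i < (occ c (c i).1).length :=
    List.idxOf_lt_length_iff.mpr hmem
  have hi : i = (occ c (c i).1).get ⟨_, hk⟩ := (List.idxOf_get hk).symm
  conv_lhs => rw [hi, mirror_get hk]
  exact mem_occ.mp (List.get_mem _ _)

def phi (c : Fin n → ℕ × Bool) : Fin n → ℕ × Bool :=
  fun i => ((c i).1, (c (mirror c i)).2)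

lemma occ_phi (c : Fin n → ℕ × Bool) (v : ℕ) : occ (phi c) v = occ c v :=
  List.filter_congr (fun i _ => by simp [phi]; congr)

lemma mirror_phi (c : Fin n → ℕ × Bool) (i : Fin n) :
    mirror (phi c) i = mirror c i := by
  simp only [mirror, phi, occ_phi]

lemma phi_phi (c : Fin n → ℕ × Bool) : phi (phi c) = c := by
  funext i
  show ((c i).1, ((phi c) (mirror (phi c) i)).2) = c i
  rw [mirror_phi]
  show ((c i).1, (c (mirror c (mirror c i))).2) = c i
  rw [mirror_mirror]

lemma signsOf_phi (c : Fin n → ℕ × Bool) (v : ℕ) :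
    signsOf n (phi c) v = (signsOf n c v).reverse := by
  have h1 : signsOf n (phi c) v = (occ c v).map (fun i => (c (mirror c i)).2) := by
    show (occ (phi c) v).map (fun i => (phi c i).2) = _
    rw [occ_phi]; rfl
  have h2 : signsOf n c v = (occ c v).map (fun i => (c i).2) := rfl
  rw [h1, h2]
  apply List.ext_getElem
  · simp
  · intro k hk hk'
    simp only [List.length_map] at hk
    rw [List.getElem_reverse]
    simp only [List.getElem_map]
    have := mirror_get (c := c) (v := v) (k := k) (by simpa using hk)
    simp only [List.get_eq_getElem] at this
    rw [this]
    congr 2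
    simp only [List.length_map]

lemma phi_preceded_iff (c : Fin n → ℕ × Bool) :
    EachPreceded n (phi c) ↔ EachFollowed n c := by
  constructor
  · intro h i hi
    set v := (c i).1 with hv
    have hmem : i ∈ occ c v := mem_occ.mpr rfl
    have hk : (occ c v).idxOf i < (occ c v).length := List.idxOf_lt_length_iff.mpr hmem
    set k := (occ c v).idxOf i with hkdef
    have hi_eq : i = (occ c v).get ⟨k, hk⟩ := (List.idxOf_get hk).symm
    set i' := mirror c i with hi'
    have hi'_eq : i' = (occ c v).get ⟨(occ c v).length - 1 - k, by omega⟩ := by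
      rw [hi']
      conv_lhs => rw [hi_eq]
      exact mirror_get hk
    have hsnd : (phi c i').2 = false := by
      show (c (mirror c i')).2 = false
      rw [hi', mirror_mirror]; exact hi
    obtain ⟨j, hjlt, hjeq⟩ := h i' hsnd
    have hfst : (phi c i').1 = v := by
      show (c i').1 = v; rw [hi']; exact mirror_fst c i
    rw [hfst] at hjeq
    have hjv : (c j).1 = v := by
      have : (phi c j).1 = v := by rw [hjeq]
      exact this
    have hjm : j ∈ occ c v := mem_occ.mpr hjv
    have hjk : (occ c v).idxOf j < (occ c v).length := List.idxOf_lt_length_iff.mpr hjm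
    have hj_eq : j = (occ c v).get ⟨_, hjk⟩ := (List.idxOf_get hjk).symm
    have hlt : (occ c v).idxOf j < (occ c v).length - 1 - k := by
      have := hjlt
      rw [hj_eq, hi'_eq] at this
      exact (occ_get_lt_iff _ _).mp this
    refine ⟨mirror c j, ?_, ?_⟩
    · rw [hj_eq, mirror_get, hi_eq]
      exact (occ_get_lt_iff _ _).mpr (by omega)
    · have h1 : (c (mirror c j)).1 = v := by rw [mirror_fst]; exact hjv
      have h2 : (c (mirror c j)).2 = true := by
        have : (phi c j).2 = true := by rw [hjeq]
        exact this
      exact Prod.ext h1 h2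
  · intro h i hi
    set v := (c i).1 with hv
    have hmem : i ∈ occ c v := mem_occ.mpr rfl
    have hk : (occ c v).idxOf i < (occ c v).length := List.idxOf_lt_length_iff.mpr hmem
    set k := (occ c v).idxOf i with hkdef
    have hi_eq : i = (occ c v).get ⟨k, hk⟩ := (List.idxOf_get hk).symm
    set i' := mirror c i with hi'
    have hi'_eq : i' = (occ c v).get ⟨(occ c v).length - 1 - k, by omega⟩ := by
      rw [hi']
      conv_lhs => rw [hi_eq]
      exact mirror_get hk
    have hi'v : (c i').1 = v := by rw [hi']; exact mirror_fst c i
    have hsnd : (c i').2 = false := hi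
    obtain ⟨j, hjlt, hjeq⟩ := h i' hsnd
    rw [hi'v] at hjeq
    have hjv : (c j).1 = v := by rw [hjeq]
    have hjm : j ∈ occ c v := mem_occ.mpr hjv
    have hjk : (occ c v).idxOf j < (occ c v).length := List.idxOf_lt_length_iff.mpr hjm
    have hj_eq : j = (occ c v).get ⟨_, hjk⟩ := (List.idxOf_get hjk).symm
    have hlt : (occ c v).length - 1 - k < (occ c v).idxOf j := by
      have := hjlt
      rw [hj_eq, hi'_eq] at this
      exact (occ_get_lt_iff _ _).mp this
    refine ⟨mirror c j, ?_, ?_⟩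
    · rw [hj_eq, mirror_get, hi_eq]
      exact (occ_get_lt_iff _ _).mpr (by omega)
    · have h1 : (phi c (mirror c j)).1 = v := by
        show (c (mirror c j)).1 = v; rw [mirror_fst]; exact hjv
      have h2 : (phi c (mirror c j)).2 = true := by
        show (c (mirror c (mirror c j))).2 = true
        rw [mirror_mirror, hjeq]
      have h3 : (phi c i).1 = v := rfl
      rw [h3]
      exact Prod.ext h1 h2

lemma isBTC_phi {c : Fin n → ℕ × Bool} (hc : IsBTC n c) : IsBTC n (phi c) := by
  intro i
  refine ⟨(hc i).1, ?_⟩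
  intro heq
  have h1 : (c i).1 = 0 := congrArg Prod.fst heq
  have h2 : (c (mirror c i)).2 = false := congrArg Prod.snd heq
  have h3 : (c (mirror c i)).1 = 0 := by rw [mirror_fst]; exact h1
  exact (hc (mirror c i)).2 (Prod.ext h3 h2)

end SRI

/-- The map keeping the numerals of a build-tree code and reversing, for each
fixed numeral, the order of the signs over its occurrences, is an involution
on build-tree codes of length `n` carrying the codes in which each `v⁻` is
preceded by some `v⁺` exactly onto the codes in which each `v⁻` is followed
by some `v⁺`. -/


theorem sign_reversal_involution (n : ℕ) :
    ∃ φ : {c : Fin n → ℕ × Bool // IsBTC n c} → {c : Fin n → ℕ × Bool // IsBTC n c},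
      Function.Involutive φ ∧
      (∀ c (i : Fin n), ((φ c).val i).1 = (c.val i).1) ∧
      (∀ c (v : ℕ), signsOf n (φ c).val v = (signsOf n c.val v).reverse) ∧
      (∀ c, EachPreceded n (φ c).val ↔ EachFollowed n c.val) := by
  refine ⟨fun c => ⟨SRI.phi c.val, SRI.isBTC_phi c.prop⟩, ?_, ?_, ?_, ?_⟩
  · intro c; exact Subtype.ext (SRI.phi_phi c.val)
  · intro c i; rfl
  · intro c v; exact SRI.signsOf_phi c.val v
  · intro c; exact SRI.phi_preceded_iff c.val
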